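/- Let f : ℝⁿ → ℝ be continuously differentiable with gradient g that is Lipschitz continuous on ℝⁿ with constant L > 0, and suppose f is strongly convex (there exists μ > 0 with f(y) ≥ f(x) + g(x)ᵀ(y − x) + (μ/2)‖y − x‖² for all x, y ∈ ℝⁿ) with unique minimizer x*. Let σ ∈ (0,1), η_max ∈ [0,1) , λ_min > 0, and 0 < ρ₁ ≤ ρ₂ < 1. Let (x_k), (α_k), (η_k), (Q_k), (C_k) be sequences with: Q₀ = 1, C₀ = f(x₀); for each k, η_k ∈ [0, η_max], Q_{k+1} = η_k Q_k + 1, C_{k+1} = (η_k Q_k C_k + f(x_{k+1}))/Q_{k+1}; α_k > 0 and x_{k+1} = x_k − α_k g(x_k); the nonmonotone Armijo condition f(x_k − α_k g(x_k)) ≤ C_k − σ α_k ‖g(x_k)‖² holds; and for each k, either α_k ≥ λ_min, or there exists α′_k > 0 with ρ₁ α′_k ≤ α_k ≤ ρ₂ α′_k and f(x_k − α′_k g(x_k)) > C_k − σ α′_k ‖g(x_k)‖². Then there exists ζ ∈ (0, 1) such that f(x_k) − f(x*) ≤ ζ^k (f(x₀) − f(x*)) for every k ≥ 0. -/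

import Mathlib

open InnerProductSpace

lemma gm_aux_descent {n : ℕ} (f : EuclideanSpace ℝ (Fin n) → ℝ) (hf : ContDiff ℝ 1 f)
    (g : EuclideanSpace ℝ (Fin n) → EuclideanSpace ℝ (Fin n))
    (hg : ∀ z, g z = gradient f z) (L : ℝ) (hL : 0 < L)
    (hLip : ∀ a b, ‖g a - g b‖ ≤ L * ‖a - b‖) (z y : EuclideanSpace ℝ (Fin n)) :
    f y ≤ f z + (inner ℝ (g z) (y - z) : ℝ) + L * ‖y - z‖ ^ 2 := by
  have hdiff : Differentiable ℝ f := hf.differentiable one_ne_zero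
  have hfd : ∀ w, fderiv ℝ f w = toDual ℝ _ (g w) := by
    intro w
    rw [hg w]
    simp [gradient]
  have key := Convex.norm_image_sub_le_of_norm_fderiv_le'
      (f := f) (φ := toDual ℝ _ (g z)) (C := L * ‖y - z‖)
      (s := Metric.closedBall z ‖y - z‖) (x := z) (y := y)
      (fun w _ => hdiff.differentiableAt)
      (fun w hw => by
        rw [hfd w, ← map_sub, (toDual ℝ _).norm_map]
        refine le_trans (hLip w z) ?_
        have hwz : ‖w - z‖ ≤ ‖y - z‖ := by
          simpa [dist_eq_norm] using Metric.mem_closedBall.mp hw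
        exact mul_le_mul_of_nonneg_left hwz hL.le)
      (convex_closedBall z _)
      (Metric.mem_closedBall_self (norm_nonneg _))
      (by simp [Metric.mem_closedBall, dist_eq_norm])
  rw [toDual_apply_apply, Real.norm_eq_abs] at key
  have h2 := (abs_le.mp key).2
  nlinarith [h2]

set_option maxHeartbeats 2000000 in
theorem gm_aos_cone_rlinear_convergence (n : ℕ)
    (f : EuclideanSpace ℝ (Fin n) → ℝ) (hf : ContDiff ℝ 1 f)
    (g : EuclideanSpace ℝ (Fin n) → EuclideanSpace ℝ (Fin n))
    (hg : ∀ z, g z = gradient f z)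
    (L : ℝ) (hL : 0 < L)
    (hLip : ∀ x y : EuclideanSpace ℝ (Fin n), ‖g x - g y‖ ≤ L * ‖x - y‖)
    (μ : ℝ) (hμ : 0 < μ)
    (hsc : ∀ x y : EuclideanSpace ℝ (Fin n),
      f y ≥ f x + (inner ℝ (g x) (y - x) : ℝ) + μ / 2 * ‖y - x‖ ^ 2)
    (xstar : EuclideanSpace ℝ (Fin n))
    (hmin : ∀ y, f xstar ≤ f y)
    (huniq : ∀ y, (∀ z, f y ≤ f z) → y = xstar)
    (σ : ℝ) (hσ : σ ∈ Set.Ioo (0 : ℝ) 1)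
    (ηmax : ℝ) (hηmax : ηmax ∈ Set.Ico (0 : ℝ) 1)
    (lamMin : ℝ) (hlamMin : 0 < lamMin)
    (ρ₁ ρ₂ : ℝ) (hρ₁ : 0 < ρ₁) (hρ₁₂ : ρ₁ ≤ ρ₂) (hρ₂ : ρ₂ < 1)
    (x : ℕ → EuclideanSpace ℝ (Fin n)) (α η Q C : ℕ → ℝ)
    (hQ0 : Q 0 = 1) (hC0 : C 0 = f (x 0))
    (hη : ∀ k, η k ∈ Set.Icc (0 : ℝ) ηmax)
    (hQrec : ∀ k, Q (k + 1) = η k * Q k + 1)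
    (hCrec : ∀ k, C (k + 1) = (η k * Q k * C k + f (x (k + 1))) / Q (k + 1))
    (hαpos : ∀ k, α k > 0)
    (hstep : ∀ k, x (k + 1) = x k - α k • g (x k))
    (harmijo : ∀ k, f (x k - α k • g (x k)) ≤ C k - σ * α k * ‖g (x k)‖ ^ 2)
    (hstepsize : ∀ k, α k ≥ lamMin ∨
      ∃ α' : ℝ, α' > 0 ∧ ρ₁ * α' ≤ α k ∧ α k ≤ ρ₂ * α' ∧
        f (x k - α' • g (x k)) > C k - σ * α' * ‖g (x k)‖ ^ 2) :
    ∃ ζ ∈ Set.Ioo (0 : ℝ) 1,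
      ∀ k : ℕ, f (x k) - f xstar ≤ ζ ^ k * (f (x 0) - f xstar) := by
  obtain ⟨hσ0, hσ1⟩ := hσ
  obtain ⟨hηm0, hηm1⟩ := hηmax
  set fs := f xstar with hfs
  -- constants
  set c : ℝ := min lamMin ((1 - σ) * ρ₁ / L) with hcdef
  have hc0 : 0 < c := lt_min hlamMin (div_pos (mul_pos (by linarith) hρ₁) hL)
  set γ : ℝ := min (σ * c * (2 * μ) * (1 - ηmax)) (1 / 2) with hγdef
  have hγ0 : 0 < γ := lt_min
    (mul_pos (mul_pos (mul_pos hσ0 hc0) (by linarith)) (by linarith)) (by norm_num)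
  have hγhalf : γ ≤ 1 / 2 := min_le_right _ _
  set A : ℝ := ηmax / (1 - ηmax) with hAdef
  have hA0 : 0 ≤ A := div_nonneg hηm0 (by linarith)
  set ρ : ℝ := max (1 - γ) (2 * A / (2 * A + 1)) with hρdef
  have hρpos : 0 < ρ := lt_of_lt_of_le (by linarith) (le_max_left _ _)
  have hρlt1 : ρ < 1 := max_lt (by linarith) (by rw [div_lt_one (by linarith)]; linarith)
  have hρ2A : 2 * A ≤ ρ * (2 * A + 1) := by
    have h := le_max_right (1 - γ) (2 * A / (2 * A + 1))
    rw [div_le_iff₀ (by linarith : (0:ℝ) < 2 * A + 1)] at h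
    linarith [h]
  have h1mγρ : 1 - γ ≤ ρ := le_max_left _ _
  set δ : ℝ := max ρ (1 - γ / 2) with hδdef
  have hδpos : 0 < δ := lt_of_lt_of_le hρpos (le_max_left _ _)
  have hδlt1 : δ < 1 := max_lt hρlt1 (by linarith)
  have hρδ : ρ ≤ δ := le_max_left _ _
  have hγ2δ : 1 - γ / 2 ≤ δ := le_max_right _ _
  -- basic sequence facts
  have hQ1 : ∀ k, 1 ≤ Q k := by
    intro k
    induction k with
    | zero => rw [hQ0]
    | succ k ih =>
      rw [hQrec k]
      have := (hη k).1
      nlinarith [ih, this]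
  have hQub : ∀ k, (1 - ηmax) * Q k ≤ 1 := by
    intro k
    induction k with
    | zero => rw [hQ0]; linarith
    | succ k ih =>
      rw [hQrec k]
      have h1 := (hη k).1
      have h2 := (hη k).2
      have h3 := hQ1 k
      nlinarith [ih, h1, h2, h3]
  have hmul : ∀ k, C (k + 1) * Q (k + 1) = η k * Q k * C k + f (x (k + 1)) := by
    intro k
    rw [hCrec k, div_mul_cancel₀]
    exact ne_of_gt (by linarith [hQ1 (k + 1)])
  have hs0 : ∀ k, 0 ≤ σ * α k * ‖g (x k)‖ ^ 2 := fun k =>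
    mul_nonneg (mul_nonneg hσ0.le (hαpos k).le) (sq_nonneg _)
  have harm : ∀ k, f (x (k + 1)) ≤ C k - σ * α k * ‖g (x k)‖ ^ 2 := by
    intro k; rw [hstep k]; exact harmijo k
  have hfC : ∀ k, f (x k) ≤ C k := by
    intro k
    induction k with
    | zero => rw [hC0]
    | succ k ih =>
      have h1 := harm k
      have h2 := hmul k
      have h3 := hQrec k
      have h4 := hQ1 (k + 1)
      have h5 := (hη k).1
      have h6 := hQ1 k
      have h7 := hs0 k
      -- C' Q' = ηQ C + f' ≥ ηQ f' + f' = Q' f'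
      have h8 : f (x (k + 1)) * Q (k + 1) ≤ C (k + 1) * Q (k + 1) := by
        rw [h2, h3]
        nlinarith [mul_nonneg (mul_nonneg h5 (by linarith : (0:ℝ) ≤ Q k))
          (by linarith : (0:ℝ) ≤ C k - f (x (k + 1)))]
      exact le_of_mul_le_mul_right h8 (by linarith : (0:ℝ) < Q (k + 1))
  have he0 : ∀ k, 0 ≤ f (x k) - fs := fun k => by linarith [hmin (x k)]
  have hE0 : ∀ k, 0 ≤ C k - fs := fun k => le_trans (he0 k) (by linarith [hfC k])
  -- PL inequality
  have hPL : ∀ z, 2 * μ * (f z - fs) ≤ ‖g z‖ ^ 2 := by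
    intro z
    have h := hsc z xstar
    have hcs : -(‖g z‖ * ‖xstar - z‖) ≤ (inner ℝ (g z) (xstar - z) : ℝ) := by
      have := abs_real_inner_le_norm (g z) (xstar - z)
      cases abs_le.mp this with
      | intro h1 h2 => linarith
    have h7 : f z - fs ≤ ‖g z‖ * ‖xstar - z‖ - μ / 2 * ‖xstar - z‖ ^ 2 := by
      rw [hfs]; linarith
    nlinarith [mul_le_mul_of_nonneg_left h7 (by linarith : (0:ℝ) ≤ 2 * μ),
      sq_nonneg (‖g z‖ - μ * ‖xstar - z‖)]
  -- descent lemma specialization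
  have hdesc : ∀ k (a : ℝ), 0 ≤ a →
      f (x k - a • g (x k)) ≤ f (x k) - a * ‖g (x k)‖ ^ 2 + L * a ^ 2 * ‖g (x k)‖ ^ 2 := by
    intro k a ha
    have h := gm_aux_descent f hf g hg L hL hLip (x k) (x k - a • g (x k))
    have he : (x k - a • g (x k)) - x k = -(a • g (x k)) := by abel
    rw [he] at h
    have hi : (inner ℝ (g (x k)) (-(a • g (x k))) : ℝ) = -(a * ‖g (x k)‖ ^ 2) := by
      rw [inner_neg_right, real_inner_smul_right, real_inner_self_eq_norm_sq]
    rw [hi] at h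
    have hn : ‖-(a • g (x k))‖ ^ 2 = a ^ 2 * ‖g (x k)‖ ^ 2 := by
      rw [norm_neg, norm_smul, Real.norm_eq_abs, mul_pow, sq_abs]
    rw [hn] at h
    linarith [h]
  -- stepsize lower bound
  have halpha : ∀ k, g (x k) ≠ 0 → c ≤ α k := by
    intro k hgz
    rcases hstepsize k with h | ⟨a', ha'pos, h1, h2, h3⟩
    · exact le_trans (min_le_left _ _) h
    · have hg2 : 0 < ‖g (x k)‖ ^ 2 := pow_pos (norm_pos_iff.mpr hgz) 2
      have hd := hdesc k a' ha'pos.le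
      have h4 : (1 - σ) * a' * ‖g (x k)‖ ^ 2 < L * a' ^ 2 * ‖g (x k)‖ ^ 2 := by
        nlinarith [hd, hfC k, h3]
      have h5 : 1 - σ < L * a' := by
        nlinarith [mul_pos ha'pos hg2, h4]
      have h6 : (1 - σ) * ρ₁ / L ≤ ρ₁ * a' := by
        rw [div_le_iff₀ hL]
        nlinarith [hρ₁, h5]
      exact le_trans (min_le_right _ _) (le_trans h6 h1)
  -- key per-step inequality
  have key : ∀ k, C (k + 1) - fs ≤ (C k - fs) - γ * (f (x k) - fs) := by
    intro k
    have h1 := harm k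
    have hQ' := hQrec k
    have hQp := hQ1 (k + 1)
    have hQu := hQub (k + 1)
    have hmk := hmul k
    have he := he0 k
    have h2 : σ * c * (2 * μ) * (f (x k) - fs) ≤ σ * α k * ‖g (x k)‖ ^ 2 := by
      by_cases hgz : g (x k) = 0
      · have hp := hPL (x k)
        rw [hgz, norm_zero] at hp
        have : f (x k) - fs ≤ 0 := by nlinarith [hp, hμ]
        have hz : f (x k) - fs = 0 := le_antisymm this he
        rw [hz, mul_zero]
        exact hs0 k
      · have hca := halpha k hgz
        have hp := hPL (x k)
        nlinarith [hp, hca, hαpos k, hσ0, hc0, he, sq_nonneg ‖g (x k)‖,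
          mul_le_mul_of_nonneg_left hca hσ0.le,
          mul_le_mul_of_nonneg_right (mul_le_mul_of_nonneg_left hca hσ0.le) (sq_nonneg ‖g (x k)‖),
          mul_le_mul_of_nonneg_left hp (mul_nonneg (mul_nonneg hσ0.le hc0.le) (by norm_num : (0:ℝ) ≤ 1/2))]
      -- want: σ c 2μ e ≤ σ α ‖g‖²
    have hA1 : C (k + 1) * Q (k + 1) ≤ Q (k + 1) * C k - σ * α k * ‖g (x k)‖ ^ 2 := by
      have hx1 : Q (k + 1) * C k = η k * Q k * C k + C k := by rw [hQ']; ring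
      linarith [hmk, h1, hx1]
    have hγle : γ * (f (x k) - fs) * Q (k + 1) ≤ σ * α k * ‖g (x k)‖ ^ 2 := by
      have t0 : 0 ≤ σ * c * (2 * μ) * (f (x k) - fs) :=
        mul_nonneg (mul_nonneg (mul_nonneg hσ0.le hc0.le) (by linarith)) he
      have t1 : σ * c * (2 * μ) * (f (x k) - fs) * ((1 - ηmax) * Q (k + 1)) ≤
          σ * c * (2 * μ) * (f (x k) - fs) * 1 := mul_le_mul_of_nonneg_left hQu t0
      have t2 : γ * (f (x k) - fs) ≤ σ * c * (2 * μ) * (1 - ηmax) * (f (x k) - fs) :=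
        mul_le_mul_of_nonneg_right (min_le_left _ _) he
      have t3 : γ * (f (x k) - fs) * Q (k + 1) ≤
          σ * c * (2 * μ) * (1 - ηmax) * (f (x k) - fs) * Q (k + 1) :=
        mul_le_mul_of_nonneg_right t2 (by linarith)
      nlinarith [t1, t3, h2]
    nlinarith [hA1, hγle, hQp, mul_nonneg (mul_nonneg hγ0.le he) (by linarith : (0:ℝ) ≤ Q (k+1) - 1)]
  have hEmono : ∀ k, C (k + 1) - fs ≤ C k - fs := by
    intro k
    have := key k
    nlinarith [this, mul_nonneg hγ0.le (he0 k)]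
  -- lower bound on e_{k+1}
  have hlow : ∀ k, (C (k + 1) - fs) - A * ((C k - fs) - (C (k + 1) - fs)) ≤ f (x (k + 1)) - fs := by
    intro k
    have hQA : Q (k + 1) - 1 ≤ A := by
      rw [hAdef, le_div_iff₀ (by linarith : (0:ℝ) < 1 - ηmax)]
      nlinarith [hQub (k + 1)]
    have hid : f (x (k + 1)) - fs =
        Q (k + 1) * (C (k + 1) - fs) - (Q (k + 1) - 1) * (C k - fs) := by
      linear_combination (-1 : ℝ) * hmul k + C k * hQrec k
    have hint : 0 ≤ (A - (Q (k + 1) - 1)) * ((C k - fs) - (C (k + 1) - fs)) :=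
      mul_nonneg (by linarith) (by linarith [hEmono k])
    nlinarith [hid, hint]
  -- two-step contraction
  have htwo : ∀ k, C (k + 2) - fs ≤ δ * (C k - fs) := by
    intro k
    by_cases hcase : C (k + 1) - fs ≤ ρ * (C k - fs)
    · have h1 := hEmono (k + 1)
      have h2 : ρ * (C k - fs) ≤ δ * (C k - fs) :=
        mul_le_mul_of_nonneg_right hρδ (hE0 k)
      calc C (k + 2) - fs ≤ C (k + 1) - fs := h1
        _ ≤ ρ * (C k - fs) := hcase
        _ ≤ δ * (C k - fs) := h2
    · push_neg at hcase
      have hgt := hcase.le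
      have hk1 := key (k + 1)
      have hl := hlow k
      have hm := hEmono k
      have hd1 : (C k - fs) - (C (k + 1) - fs) ≤ (1 - ρ) * (C k - fs) := by
        nlinarith [hgt]
      have hd2 : γ * A * ((C k - fs) - (C (k + 1) - fs)) ≤ γ * A * ((1 - ρ) * (C k - fs)) :=
        mul_le_mul_of_nonneg_left hd1 (mul_nonneg hγ0.le hA0)
      have hd3 : A * (1 - ρ) ≤ 1 / 2 := by nlinarith [hρ2A, hρlt1.le, hA0]
      have hd4 : γ * A * ((1 - ρ) * (C k - fs)) ≤ γ / 2 * (C k - fs) := by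
        nlinarith [mul_le_mul_of_nonneg_right
          (mul_le_mul_of_nonneg_left hd3 hγ0.le) (hE0 k)]
      have hd5 : γ * ((C (k + 1) - fs) - A * ((C k - fs) - (C (k + 1) - fs))) ≤
          γ * (f (x (k + 1)) - fs) := mul_le_mul_of_nonneg_left hl hγ0.le
      have hd6 : (1 - γ) * (C (k + 1) - fs) ≤ (1 - γ) * (C k - fs) :=
        mul_le_mul_of_nonneg_left hm (by linarith)
      have hd7 : (1 - γ / 2) * (C k - fs) ≤ δ * (C k - fs) :=
        mul_le_mul_of_nonneg_right hγ2δ (hE0 k)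
      nlinarith [hk1, hd2, hd4, hd5, hd6, hd7]
  -- first step
  have h1step : C 1 - fs ≤ (1 - γ) * (C 0 - fs) := by
    have := key 0
    rw [hC0] at this ⊢
    nlinarith [this]
  -- define ζ
  refine ⟨Real.sqrt δ, ⟨Real.sqrt_pos.mpr hδpos, ?_⟩, ?_⟩
  · nlinarith [Real.sq_sqrt hδpos.le, Real.sqrt_nonneg δ, hδlt1]
  · have hζ0 : 0 ≤ Real.sqrt δ := Real.sqrt_nonneg δ
    have hζsq : Real.sqrt δ ^ 2 = δ := Real.sq_sqrt hδpos.le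
    have hζlt1 : Real.sqrt δ < 1 := by nlinarith [hζsq, hζ0, hδlt1]
    have hδζ : δ ≤ Real.sqrt δ := by nlinarith [hζsq, hζ0, hζlt1.le]
    set ζ := Real.sqrt δ with hζdef
    have hE00 : C 0 - fs = f (x 0) - fs := by rw [hC0]
    have main : ∀ k, (C k - fs ≤ ζ ^ k * (C 0 - fs)) ∧
        (C (k + 1) - fs ≤ ζ ^ (k + 1) * (C 0 - fs)) := by
      intro k
      induction k with
      | zero =>
        constructor
        · simp
        · rw [pow_one]
          have : (1 - γ) * (C 0 - fs) ≤ ζ * (C 0 - fs) :=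
            mul_le_mul_of_nonneg_right (by linarith [h1mγρ, hρδ, hδζ]) (hE0 0)
          linarith [h1step]
      | succ k ih =>
        refine ⟨ih.2, ?_⟩
        have h1 := htwo k
        have h2 : δ * (C k - fs) ≤ δ * (ζ ^ k * (C 0 - fs)) :=
          mul_le_mul_of_nonneg_left ih.1 hδpos.le
        have h3 : δ * (ζ ^ k * (C 0 - fs)) = ζ ^ (k + 1 + 1) * (C 0 - fs) := by
          rw [← hζsq]; ring
        calc C (k + 1 + 1) - fs ≤ δ * (C k - fs) := h1
          _ ≤ δ * (ζ ^ k * (C 0 - fs)) := h2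
          _ = ζ ^ (k + 1 + 1) * (C 0 - fs) := h3
    intro k
    have := (main k).1
    rw [hE00] at this
    have hfk : f (x k) - fs ≤ C k - fs := by linarith [hfC k]
    linarith [this, hfk]
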